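/- Let (Ω, μ) be a probability space, let f : Ω × [−π, π] → ℝ be jointly measurable with f(ω, x) > 0 for all x and almost every ω, and let c_k(ω) = (1/2π) ∫_{−π}^{π} e^{−ikx} f(ω, x) dx be its Fourier coefficients. Assume each c_k is bounded on Ω and Σ_{k∈ℤ} ‖c_k‖_∞ < ∞, where ‖c_k‖_∞ = sup_{ω∈Ω} |c_k(ω)|. Let T_n(ω) be the n×n Hermitian Toeplitz matrix with entries (T_n)_{k,j} = c_{k−j}(ω), 0 ≤ k, j ≤ n−1, and let S_n(ω) be the Strang circulant preconditioner: S_n(ω) has entries (S_n)_{k,j} = s_{k−j}(ω) where, writing n = 2m+1 (odd case), s_ℓ = c_ℓ for 0 ≤ ℓ ≤ m and s_ℓ = c_{ℓ−n} for m < ℓ ≤ n−1, while for n = 2m (even case) s_ℓ = c_ℓ for 0 ≤ ℓ ≤ m−1, s_m = (c_m + c_{−m})/2, and s_ℓ = c_{ℓ−n} for m < ℓ ≤ n−1; in both cases s_{−ℓ} = conj(s_ℓ) for 0 < ℓ ≤ n−1. For 1 ≤ j ≤ n, let λ_j(S_n(ω) − T_n(ω)) denote the j-th smallest eigenvalue of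 the Hermitian matrix S_n(ω) − T_n(ω). Then for every ε > 0 there exist M > 0 and N > 0 such that for all n > N, at most M of the n eigenvalue functions satisfy sup_{ω∈Ω} |λ_j(S_n(ω) − T_n(ω))| > ε. -/

import Mathlib

open MeasureTheory Filter Matrix

/-- The eigenvalues of a Hermitian matrix, sorted in increasing order
(`sortedEigenvalues hA ⟨k, _⟩` is the `(k+1)`-th smallest eigenvalue, with multiplicity). -/
noncomputable def sortedEigenvalues {n : ℕ} {A : Matrix (Fin n) (Fin n) ℂ}
    (hA : A.IsHermitian) : Fin n → ℝ :=
  hA.eigenvalues ∘ Tuple.sort hA.eigenvalues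

/-- The symbol of the Strang circulant preconditioner for nonnegative offsets `ℓ`:
for `n = 2m+1` it is `c_ℓ` when `ℓ ≤ m` (i.e. `2ℓ < n`) and `c_{ℓ-n}` when `m < ℓ`;
for `n = 2m` it is `c_ℓ` when `ℓ ≤ m-1`, `(c_m + c_{-m})/2` when `ℓ = m` (i.e. `2ℓ = n`),
and `c_{ℓ-n}` when `m < ℓ`. -/
noncomputable def strangPos (c : ℤ → ℂ) (n : ℕ) (ℓ : ℤ) : ℂ :=
  if 2 * ℓ < (n : ℤ) then c ℓ
  else if 2 * ℓ = (n : ℤ) then (c ℓ + c (-ℓ)) / 2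
  else c (ℓ - n)

/-- The full symbol of the Strang circulant preconditioner: `s_{-ℓ} = conj (s_ℓ)`. -/
noncomputable def strangSym (c : ℤ → ℂ) (n : ℕ) (ℓ : ℤ) : ℂ :=
  if 0 ≤ ℓ then strangPos c n ℓ else (starRingEnd ℂ) (strangPos c n (-ℓ))

open Finset

lemma count_sign {n r : ℕ} {E : Matrix (Fin n) (Fin n) ℂ} (hE : E.IsHermitian)
    {ε : ℝ} (hε : 0 < ε)
    (hq : ∀ x : Fin n → ℂ, (∀ j : Fin n, (j : ℕ) < r → x j = 0) →
      ‖star x ⬝ᵥ E *ᵥ x‖ ≤ ε * ∑ j, ‖x j‖ ^ 2)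
    (s : ℝ) (hs : s = 1 ∨ s = -1) :
    {i : Fin n | ε < s * hE.eigenvalues i}.ncard ≤ r := by
  classical
  have hset : {i : Fin n | ε < s * hE.eigenvalues i}.ncard
      = (univ.filter fun i : Fin n => ε < s * hE.eigenvalues i).card := by
    rw [Set.ncard_eq_toFinset_card']
    congr 1
    ext i
    simp
  rw [hset]
  set P : Finset (Fin n) := univ.filter fun i : Fin n => ε < s * hE.eigenvalues i with hP
  by_contra hcon
  push_neg at hcon
  have hPn : P.card ≤ n := by simpa using P.card_le_univ
  have hrn : r ≤ n := le_trans hcon.le hPn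
  set U : Matrix (Fin n) (Fin n) ℂ := (hE.eigenvectorUnitary : Matrix (Fin n) (Fin n) ℂ) with hU
  -- the combined linear map
  set L1 : (Fin n → ℂ) →ₗ[ℂ] (Fin r → ℂ) :=
    (LinearMap.funLeft ℂ ℂ (Fin.castLE hrn)).comp (Matrix.mulVecLin U) with hL1
  set L2 : (Fin n → ℂ) →ₗ[ℂ] ({i : Fin n // i ∉ P} → ℂ) :=
    LinearMap.funLeft ℂ ℂ Subtype.val with hL2
  set Θ := L1.prod L2 with hΘ
  have hker : 0 < Module.finrank ℂ (LinearMap.ker Θ) := by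
    have h1 := Θ.finrank_range_add_finrank_ker
    have h2 : Module.finrank ℂ (LinearMap.range Θ)
        ≤ Module.finrank ℂ ((Fin r → ℂ) × ({i : Fin n // i ∉ P} → ℂ)) :=
      Submodule.finrank_le _
    have h3 : Module.finrank ℂ ((Fin r → ℂ) × ({i : Fin n // i ∉ P} → ℂ))
        = r + (n - P.card) := by
      rw [Module.finrank_prod]
      simp [Module.finrank_fintype_fun_eq_card, Fintype.card_subtype_compl]
    have h4 : Module.finrank ℂ (Fin n → ℂ) = n := by
      simp [Module.finrank_fintype_fun_eq_card]
    omega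
  obtain ⟨⟨y, hyker⟩, hy0⟩ := (Module.finrank_pos_iff_exists_ne_zero).mp hker
  have hyne : y ≠ 0 := by
    intro h
    apply hy0
    ext
    simp [h]
  have hΘy : Θ y = 0 := hyker
  have hy1 : ∀ i : Fin r, (U *ᵥ y) (Fin.castLE hrn i) = 0 := by
    intro i
    have := congrArg Prod.fst hΘy
    exact congrFun this i
  have hy2 : ∀ i : Fin n, i ∉ P → y i = 0 := by
    intro i hi
    have := congrArg Prod.snd hΘy
    exact congrFun this ⟨i, hi⟩
  set x : Fin n → ℂ := U *ᵥ y with hx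
  have hxsupp : ∀ j : Fin n, (j : ℕ) < r → x j = 0 := by
    intro j hj
    have := hy1 ⟨(j : ℕ), hj⟩
    simpa [Fin.castLE] using this
  have hUU : Uᴴ * U = 1 := by
    rw [← Matrix.star_eq_conjTranspose]
    exact Unitary.coe_star_mul_self hE.eigenvectorUnitary
  -- quadratic form identity
  have hdiag : star x ⬝ᵥ E *ᵥ x
      = star y ⬝ᵥ (Matrix.diagonal (RCLike.ofReal ∘ hE.eigenvalues) *ᵥ y) := by
    rw [← hE.conjStarAlgAut_star_eigenvectorUnitary, Unitary.conjStarAlgAut_star_apply]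
    rw [hx, star_mulVec, mulVec_mulVec, dotProduct_mulVec, vecMul_vecMul,
      dotProduct_mulVec, Matrix.star_eq_conjTranspose, ← Matrix.mul_assoc]
  have hform : star x ⬝ᵥ E *ᵥ x
      = ((∑ i, hE.eigenvalues i * ‖y i‖ ^ 2 : ℝ) : ℂ) := by
    rw [hdiag, Complex.ofReal_sum]
    simp only [dotProduct, mulVec_diagonal, Pi.star_apply, Function.comp_apply,
      RCLike.star_def, RCLike.ofReal_alg]
    refine Finset.sum_congr rfl fun i _ => ?_
    have h1 : (starRingEnd ℂ) (y i) * ((hE.eigenvalues i : ℂ) * y i)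
        = (hE.eigenvalues i : ℂ) * (y i * (starRingEnd ℂ) (y i)) := by ring
    rw [show ((hE.eigenvalues i) • (1:ℂ)) = ((hE.eigenvalues i : ℝ) : ℂ) from by
      simp [Complex.real_smul], h1, Complex.mul_conj]
    push_cast [Complex.normSq_eq_norm_sq]
    ring
  have hvv : ∀ v : Fin n → ℂ, star v ⬝ᵥ v = ((∑ j, ‖v j‖ ^ 2 : ℝ) : ℂ) := by
    intro v
    simp only [dotProduct, Pi.star_apply, Complex.ofReal_sum, RCLike.star_def]
    refine Finset.sum_congr rfl fun i _ => ?_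
    rw [show (starRingEnd ℂ) (v i) * v i = v i * (starRingEnd ℂ) (v i) from by ring,
      Complex.mul_conj]
    push_cast [Complex.normSq_eq_norm_sq]
    ring
  have hxx : (∑ j, ‖x j‖ ^ 2) = (∑ i, ‖y i‖ ^ 2) := by
    have h1 : star x ⬝ᵥ x = star y ⬝ᵥ y := by
      rw [hx, star_mulVec, dotProduct_mulVec, vecMul_vecMul, hUU, vecMul_one]
    rw [hvv x, hvv y] at h1
    exact_mod_cast h1
  set R : ℝ := ∑ i, hE.eigenvalues i * ‖y i‖ ^ 2 with hR
  obtain ⟨i₀, hi₀⟩ : ∃ i, y i ≠ 0 := by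
    by_contra h; push_neg at h; exact hyne (funext h)
  have hi₀P : i₀ ∈ P := by
    by_contra h; exact hi₀ (hy2 i₀ h)
  have hzero : ∀ i ∈ univ, i ∉ P → ‖y i‖ ^ 2 = 0 := by
    intro i _ hip; rw [hy2 i hip]; simp
  have hsum1 : ∑ i, ‖y i‖ ^ 2 = ∑ i ∈ P, ‖y i‖ ^ 2 :=
    (Finset.sum_subset P.subset_univ hzero).symm
  have hsum2 : s * R = ∑ i ∈ P, s * hE.eigenvalues i * ‖y i‖ ^ 2 := by
    rw [hR, Finset.mul_sum,
      ← Finset.sum_subset P.subset_univ (fun i hu hip => by rw [hy2 i hip]; simp)]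
    exact Finset.sum_congr rfl fun i _ => by ring
  have hmemP : ∀ i ∈ P, ε < s * hE.eigenvalues i := by
    intro i hi
    simpa [hP] using hi
  have hlt : ε * ∑ i ∈ P, ‖y i‖ ^ 2 < ∑ i ∈ P, s * hE.eigenvalues i * ‖y i‖ ^ 2 := by
    rw [Finset.mul_sum]
    apply Finset.sum_lt_sum
    · exact fun i hi => mul_le_mul_of_nonneg_right (hmemP i hi).le (by positivity)
    · exact ⟨i₀, hi₀P, mul_lt_mul_of_pos_right (hmemP i₀ hi₀P)
        (pow_pos (norm_pos_iff.mpr hi₀) 2)⟩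
  have habs : s * R ≤ |R| := by
    rcases hs with h | h
    · rw [h]; simpa using le_abs_self R
    · rw [h]; simpa using neg_le_abs R
  have hfinal := hq x hxsupp
  rw [hform, Complex.norm_real, Real.norm_eq_abs, hxx, hsum1] at hfinal
  rw [hsum2] at habs
  linarith

section helpers

variable {n r : ℕ} {E : Matrix (Fin n) (Fin n) ℂ}

lemma sorted_loc (hE : E.IsHermitian) {ε : ℝ} (hε : 0 < ε)
    (hq : ∀ x : Fin n → ℂ, (∀ j : Fin n, (j : ℕ) < r → x j = 0) →
      ‖star x ⬝ᵥ E *ᵥ x‖ ≤ ε * ∑ j, ‖x j‖ ^ 2)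
    (j : Fin n) (hj : ε < |sortedEigenvalues hE j|) :
    (j : ℕ) < r ∨ n ≤ (j : ℕ) + r := by
  classical
  have hmono : Monotone (sortedEigenvalues hE) := Tuple.monotone_sort hE.eigenvalues
  have hcount : ∀ s : ℝ, s = 1 ∨ s = -1 →
      {i : Fin n | ε < s * sortedEigenvalues hE i}.ncard ≤ r := by
    intro s hs
    have h1 := count_sign hE hε hq s hs
    have h2 : {i : Fin n | ε < s * sortedEigenvalues hE i}
        = (Tuple.sort hE.eigenvalues).symm '' {i : Fin n | ε < s * hE.eigenvalues i} := by
      rw [Equiv.image_eq_preimage_symm]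
      ext i
      simp [sortedEigenvalues]
    rw [h2, Set.ncard_image_of_injective _ (Tuple.sort hE.eigenvalues).symm.injective]
    exact h1
  rcases lt_abs.mp hj with h | h
  · right
    have hsub : Set.Ici j ⊆ {i : Fin n | ε < 1 * sortedEigenvalues hE i} := by
      intro i hi
      have := hmono (Set.mem_Ici.mp hi)
      simp only [Set.mem_setOf_eq, one_mul]
      linarith
    have hc := le_trans (Set.ncard_le_ncard hsub (Set.toFinite _)) (hcount 1 (Or.inl rfl))
    have hIci : (Set.Ici j).ncard = n - (j : ℕ) := by
      rw [← Finset.coe_Ici, Set.ncard_coe_finset, Fin.card_Ici]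
    have := j.isLt
    omega
  · left
    have hsub : Set.Iic j ⊆ {i : Fin n | ε < (-1) * sortedEigenvalues hE i} := by
      intro i hi
      have := hmono (Set.mem_Iic.mp hi)
      simp only [Set.mem_setOf_eq, neg_one_mul]
      linarith
    have hc := le_trans (Set.ncard_le_ncard hsub (Set.toFinite _)) (hcount (-1) (Or.inr rfl))
    have hIic : (Set.Iic j).ncard = (j : ℕ) + 1 := by
      rw [← Finset.coe_Iic, Set.ncard_coe_finset, Fin.card_Iic]
    omega

lemma loc_card_le (N₀ : ℕ) :
    {j : Fin n | (j : ℕ) < N₀ ∨ n ≤ (j : ℕ) + N₀}.ncard ≤ 2 * N₀ := by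
  classical
  have h2 : {j : Fin n | (j : ℕ) < N₀ ∨ n ≤ (j : ℕ) + N₀}
      = {j : Fin n | (j : ℕ) < N₀} ∪ {j : Fin n | n ≤ (j : ℕ) + N₀} := by
    ext j; simp [Set.mem_setOf_eq]
  rw [h2]
  refine le_trans (Set.ncard_union_le _ _) ?_
  have hA : {j : Fin n | (j : ℕ) < N₀}.ncard ≤ N₀ := by
    rw [Set.ncard_eq_toFinset_card', Set.toFinset_setOf]
    refine le_trans (Finset.card_le_card_of_injOn (t := Finset.range N₀) Fin.val
      (fun j hj => by simp at hj ⊢; omega) (fun a _ b _ hab => Fin.ext hab)) ?_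
    simp
  have hB : {j : Fin n | n ≤ (j : ℕ) + N₀}.ncard ≤ N₀ := by
    rw [Set.ncard_eq_toFinset_card', Set.toFinset_setOf]
    refine le_trans (Finset.card_le_card_of_injOn (t := Finset.Ico (n - N₀) n) Fin.val
      ?_ ?_) ?_
    · intro j hj
      rw [Finset.mem_coe, Finset.mem_filter] at hj
      rw [Finset.mem_coe, Finset.mem_Ico]
      exact ⟨by omega, j.isLt⟩
    · exact fun a _ b _ hab => Fin.ext hab
    · rw [Nat.card_Ico]; omega
  omega

end helpers

/-- Chan's clustering theorem for random Toeplitz matrices in the Wiener class: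
if `f > 0` and `Σ_k sup_ω |c_k(ω)| < ∞`, `T_n(ω)` is the `n × n` Hermitian Toeplitz matrix of the
Fourier coefficients `c_k(ω)` of `f(ω,·)` and `S_n(ω)` its Strang circulant preconditioner, then
for every `ε > 0` there are `M, N` such that for all `n > N` at most `M` of the `n` eigenvalue
functions of `S_n - T_n` have sup-norm exceeding `ε`. -/
theorem strang_preconditioner_spectrum_clustering
    {Ω : Type*} [MeasurableSpace Ω] (μ : Measure Ω) [IsProbabilityMeasure μ]
    (f : Ω × ℝ → ℝ) (hf : Measurable f)
    (hpos : ∀ᵐ ω ∂μ, ∀ x ∈ Set.Icc (-Real.pi) Real.pi, 0 < f (ω, x))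
    (c : ℤ → Ω → ℂ)
    (hc : ∀ (k : ℤ) (ω : Ω), c k ω = (1 / (2 * (Real.pi : ℂ))) *
      ∫ x in (-Real.pi)..Real.pi, Complex.exp (-Complex.I * (k : ℂ) * (x : ℂ)) * (f (ω, x) : ℂ))
    (hbd : ∀ k : ℤ, BddAbove (Set.range fun ω => ‖c k ω‖))
    (hsum : Summable fun k : ℤ => ⨆ ω, ‖c k ω‖)
    (T S : (n : ℕ) → Ω → Matrix (Fin n) (Fin n) ℂ)
    (hT : ∀ n ω (k j : Fin n), T n ω k j = c ((k : ℤ) - (j : ℤ)) ω)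
    (hS : ∀ n ω (k j : Fin n), S n ω k j = strangSym (fun i => c i ω) n ((k : ℤ) - (j : ℤ)))
    (hherm : ∀ n ω, (S n ω - T n ω).IsHermitian) :
    ∀ ε : ℝ, 0 < ε → ∃ M N : ℕ, ∀ n : ℕ, N < n →
      Set.ncard {j : Fin n | ∃ ω, ε < |sortedEigenvalues (hherm n ω) j|} ≤ M := by
  intro ε hε
  classical
  have hΩ : Nonempty Ω := by
    by_contra hcon
    have h0 : μ Set.univ = 0 := by
      rw [Set.univ_eq_empty_iff.mpr (not_nonempty_iff.mp hcon)]
      simp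
    rw [measure_univ] at h0
    exact one_ne_zero h0
  set a : ℤ → ℝ := fun k => ⨆ ω, ‖c k ω‖ with hadef
  have hac : ∀ (k : ℤ) (ω : Ω), ‖c k ω‖ ≤ a k := fun k ω => le_ciSup (hbd k) ω
  have ha0 : ∀ k, 0 ≤ a k := fun k =>
    le_trans (norm_nonneg _) (hac k (Classical.arbitrary Ω))
  obtain ⟨s, hsv⟩ := summable_iff_vanishing_norm.mp hsum (ε / 4) (by positivity)
  set N₀ : ℕ := s.sup Int.natAbs + 1 with hN₀
  have htail : ∀ t : Finset ℤ, (∀ m ∈ t, N₀ ≤ m.natAbs) → ∑ m ∈ t, a m ≤ ε / 4 := by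
    intro t ht
    have hdisj : Disjoint t s := by
      rw [Finset.disjoint_left]
      intro m hm hms
      have h1 := Finset.le_sup (f := Int.natAbs) hms
      have h2 := ht m hm
      omega
    have h3 := hsv t hdisj
    rw [Real.norm_eq_abs] at h3
    exact le_trans (le_abs_self _) h3.le
  refine ⟨2 * N₀, 2 * N₀ + 2, fun n hn => ?_⟩
  have hqbnd : ∀ (ω : Ω) (x : Fin n → ℂ), (∀ j : Fin n, (j : ℕ) < N₀ → x j = 0) →
      ‖star x ⬝ᵥ (S n ω - T n ω) *ᵥ x‖ ≤ ε * ∑ j, ‖x j‖ ^ 2 := by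
    intro ω x hx
    set E := S n ω - T n ω with hE
    set qb : ℤ → ℝ := fun ℓ => if 2 * ℓ < (n : ℤ) then 0 else a ℓ + a (ℓ - n) with hqbdef
    have hqb0 : ∀ ℓ, 0 ≤ qb ℓ := by
      intro ℓ
      by_cases hcond : 2 * ℓ < (n : ℤ) <;>
        simp [hqbdef, hcond, add_nonneg (ha0 _) (ha0 _)]
    set hh : ℤ → ℝ := fun ℓ => qb ℓ + qb (-ℓ) with hhdef
    have hh0 : ∀ ℓ, 0 ≤ hh ℓ := fun ℓ => add_nonneg (hqb0 _) (hqb0 _)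
    have hstepA : ∀ k j : Fin n, 0 ≤ (k : ℤ) - (j : ℤ) →
        ‖E k j‖ ≤ qb ((k : ℤ) - (j : ℤ)) := by
      intro k j hkj
      have hEkj : E k j
          = strangSym (fun i => c i ω) n ((k : ℤ) - (j : ℤ)) - c ((k : ℤ) - (j : ℤ)) ω := by
        rw [hE, Matrix.sub_apply, hS n ω k j, hT n ω k j]
      rw [hEkj]
      simp only [strangSym, strangPos, if_pos hkj]
      by_cases h1 : 2 * ((k : ℤ) - (j : ℤ)) < (n : ℤ)
      · rw [if_pos h1]
        simp [hqbdef, h1, sub_self]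
      · rw [if_neg h1]
        simp only [hqbdef, if_neg h1]
        by_cases h2 : 2 * ((k : ℤ) - (j : ℤ)) = (n : ℤ)
        · rw [if_pos h2]
          have hmℓ : (k : ℤ) - (j : ℤ) - (n : ℤ) = -((k : ℤ) - (j : ℤ)) := by omega
          rw [hmℓ]
          have e1 : (c ((k : ℤ) - (j : ℤ)) ω + c (-((k : ℤ) - (j : ℤ))) ω) / 2
              - c ((k : ℤ) - (j : ℤ)) ω
              = (c (-((k : ℤ) - (j : ℤ))) ω - c ((k : ℤ) - (j : ℤ)) ω) / 2 := by ring
          rw [e1]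
          have hb1 := hac ((k : ℤ) - (j : ℤ)) ω
          have hb2 := hac (-((k : ℤ) - (j : ℤ))) ω
          have hb3 := ha0 ((k : ℤ) - (j : ℤ))
          have hb4 := ha0 (-((k : ℤ) - (j : ℤ)))
          have hns := norm_sub_le (c (-((k : ℤ) - (j : ℤ))) ω) (c ((k : ℤ) - (j : ℤ)) ω)
          have hnd : ‖(c (-((k : ℤ) - (j : ℤ))) ω - c ((k : ℤ) - (j : ℤ)) ω) / 2‖
              = ‖c (-((k : ℤ) - (j : ℤ))) ω - c ((k : ℤ) - (j : ℤ)) ω‖ / 2 := by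
            rw [norm_div]
            simp
          rw [hnd]
          linarith
        · rw [if_neg h2]
          have hb1 := hac ((k : ℤ) - (j : ℤ)) ω
          have hb2 := hac ((k : ℤ) - (j : ℤ) - (n : ℤ)) ω
          have hns := norm_sub_le (c ((k : ℤ) - (j : ℤ) - (n : ℤ)) ω) (c ((k : ℤ) - (j : ℤ)) ω)
          linarith
    have hstepB : ∀ k j : Fin n, ‖E k j‖ ≤ hh ((k : ℤ) - (j : ℤ)) := by
      intro k j
      rcases le_or_gt 0 ((k : ℤ) - (j : ℤ)) with hkj | hkj
      · exact le_trans (hstepA k j hkj) (le_add_of_nonneg_right (hqb0 _))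
      · have hherm' := hherm n ω
        rw [← hE] at hherm'
        have hsym : ‖E k j‖ = ‖E j k‖ := by
          conv_lhs => rw [← hherm']
          rw [Matrix.conjTranspose_apply, norm_star]
        have h1 := hstepA j k (by omega)
        have h2 : -((k : ℤ) - (j : ℤ)) = (j : ℤ) - (k : ℤ) := by ring
        rw [hsym, hhdef]
        simp only [h2]
        exact h1.trans (le_add_of_nonneg_left (hqb0 _))
    set g : Fin n → Fin n → ℝ := fun k j =>
      if (k : ℕ) < N₀ ∨ (j : ℕ) < N₀ then 0 else hh ((k : ℤ) - (j : ℤ)) with hgdef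
    have hg0 : ∀ k j, 0 ≤ g k j := by
      intro k j
      by_cases hcond : (k : ℕ) < N₀ ∨ (j : ℕ) < N₀ <;> simp [hgdef, hcond, hh0]
    have hstepC : ∀ k j : Fin n, ‖x k‖ * (‖E k j‖ * ‖x j‖)
        ≤ g k j * ((‖x k‖ ^ 2 + ‖x j‖ ^ 2) / 2) := by
      intro k j
      by_cases hcond : (k : ℕ) < N₀ ∨ (j : ℕ) < N₀
      · have hz : ‖x k‖ * (‖E k j‖ * ‖x j‖) = 0 := by
          rcases hcond with hcond | hcond
          · rw [hx k hcond]; simp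
          · rw [hx j hcond]; simp
        rw [hz, hgdef]
        simp [hcond]
      · have h1 : ‖x k‖ * (‖E k j‖ * ‖x j‖) ≤ hh ((k : ℤ) - (j : ℤ)) * (‖x k‖ * ‖x j‖) := by
          have := hstepB k j
          have hnn : (0:ℝ) ≤ ‖x k‖ * ‖x j‖ := by positivity
          calc ‖x k‖ * (‖E k j‖ * ‖x j‖) = ‖E k j‖ * (‖x k‖ * ‖x j‖) := by ring
          _ ≤ hh ((k : ℤ) - (j : ℤ)) * (‖x k‖ * ‖x j‖) :=
              mul_le_mul_of_nonneg_right this hnn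
        have h2 : ‖x k‖ * ‖x j‖ ≤ (‖x k‖ ^ 2 + ‖x j‖ ^ 2) / 2 := by
          nlinarith [sq_nonneg (‖x k‖ - ‖x j‖)]
        rw [hgdef]
        simp only [if_neg hcond]
        exact h1.trans (mul_le_mul_of_nonneg_left h2 (hh0 _))
    have hsumq : ∀ (F : Finset (Fin n)) (u : Fin n → ℤ),
        (∀ p ∈ F, ∀ q ∈ F, u p = u q → p = q) →
        (∀ j ∈ F, (u j).natAbs + N₀ < n) → ∑ j ∈ F, qb (u j) ≤ ε / 4 + ε / 4 := by
      intro F u hinj hub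
      set F' := F.filter (fun j => ¬ 2 * u j < (n : ℤ)) with hF'
      have hFF : F' ⊆ F := Finset.filter_subset _ _
      have h1 : ∑ j ∈ F, qb (u j) = ∑ j ∈ F', qb (u j) := by
        refine (Finset.sum_subset hFF fun j hj hj' => ?_).symm
        have hlt : 2 * u j < (n : ℤ) := by
          by_contra hcon
          exact hj' (Finset.mem_filter.mpr ⟨hj, hcon⟩)
        simp [hqbdef, hlt]
      have h2 : ∑ j ∈ F', qb (u j) = ∑ j ∈ F', a (u j) + ∑ j ∈ F', a (u j - n) := by
        rw [← Finset.sum_add_distrib]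
        refine Finset.sum_congr rfl fun j hj => ?_
        have := (Finset.mem_filter.mp hj).2
        simp [hqbdef, this]
      have hinj' : ∀ p ∈ F', ∀ q ∈ F', u p = u q → p = q :=
        fun p hp q hq hpq => hinj p (hFF hp) q (hFF hq) hpq
      have hs1 : ∑ j ∈ F', a (u j) ≤ ε / 4 := by
        rw [← Finset.sum_image hinj']
        refine htail _ fun m hm => ?_
        obtain ⟨j, hj, rfl⟩ := Finset.mem_image.mp hm
        have hc1 := (Finset.mem_filter.mp hj).2
        omega
      have hs2 : ∑ j ∈ F', a (u j - n) ≤ ε / 4 := by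
        have hinj'' : ∀ p ∈ F', ∀ q ∈ F', u p - n = u q - n → p = q :=
          fun p hp q hq hpq => hinj' p hp q hq (by omega)
        rw [← Finset.sum_image hinj'']
        refine htail _ fun m hm => ?_
        obtain ⟨j, hj, rfl⟩ := Finset.mem_image.mp hm
        have hc1 := (Finset.mem_filter.mp hj).2
        have hc2 := hub j (hFF hj)
        omega
      rw [h1, h2]
      exact add_le_add hs1 hs2
    have hrow : ∀ k : Fin n, ∑ j, g k j ≤ ε := by
      intro k
      by_cases hk : (k : ℕ) < N₀
      · have hz : ∀ j, g k j = 0 := fun j => by simp [hgdef, hk]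
        simp only [hz, Finset.sum_const_zero]
        positivity
      · set F := Finset.univ.filter (fun j : Fin n => ¬ (j : ℕ) < N₀) with hF
        have e1 : ∑ j ∈ F, g k j = ∑ j, g k j :=
          Finset.sum_subset (Finset.filter_subset _ _) (fun j _ hj' => by
            have hjN : (j : ℕ) < N₀ := by
              by_contra hcc
              exact hj' (Finset.mem_filter.mpr ⟨Finset.mem_univ _, hcc⟩)
            simp [hgdef, hjN])
        rw [← e1]
        have e2 : ∑ j ∈ F, g k j
            = ∑ j ∈ F, qb ((k : ℤ) - (j : ℤ)) + ∑ j ∈ F, qb ((j : ℤ) - (k : ℤ)) := by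
          rw [← Finset.sum_add_distrib]
          refine Finset.sum_congr rfl fun j hj => ?_
          have hjN := (Finset.mem_filter.mp hj).2
          simp [hgdef, hk, hjN, hhdef, neg_sub]
        rw [e2]
        have hb1 : ∑ j ∈ F, qb ((k : ℤ) - (j : ℤ)) ≤ ε / 4 + ε / 4 := by
          refine hsumq F _ (fun p hp q hq hpq => Fin.ext (by omega)) fun j hj => ?_
          have hjN := (Finset.mem_filter.mp hj).2
          have hj1 := j.isLt
          have hk1 := k.isLt
          omega
        have hb2 : ∑ j ∈ F, qb ((j : ℤ) - (k : ℤ)) ≤ ε / 4 + ε / 4 := by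
          refine hsumq F _ (fun p hp q hq hpq => Fin.ext (by omega)) fun j hj => ?_
          have hjN := (Finset.mem_filter.mp hj).2
          have hj1 := j.isLt
          have hk1 := k.isLt
          omega
        linarith
    have hcol : ∀ j : Fin n, ∑ k, g k j ≤ ε := by
      intro j
      by_cases hj : (j : ℕ) < N₀
      · have hz : ∀ k, g k j = 0 := fun k => by simp [hgdef, hj]
        simp only [hz, Finset.sum_const_zero]
        positivity
      · set F := Finset.univ.filter (fun k : Fin n => ¬ (k : ℕ) < N₀) with hF
        have e1 : ∑ k ∈ F, g k j = ∑ k, g k j :=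
          Finset.sum_subset (Finset.filter_subset _ _) (fun k _ hk' => by
            have hkN : (k : ℕ) < N₀ := by
              by_contra hcc
              exact hk' (Finset.mem_filter.mpr ⟨Finset.mem_univ _, hcc⟩)
            simp [hgdef, hkN])
        rw [← e1]
        have e2 : ∑ k ∈ F, g k j
            = ∑ k ∈ F, qb ((k : ℤ) - (j : ℤ)) + ∑ k ∈ F, qb ((j : ℤ) - (k : ℤ)) := by
          rw [← Finset.sum_add_distrib]
          refine Finset.sum_congr rfl fun k hk => ?_
          have hkN := (Finset.mem_filter.mp hk).2
          simp [hgdef, hj, hkN, hhdef, neg_sub]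
        rw [e2]
        have hb1 : ∑ k ∈ F, qb ((k : ℤ) - (j : ℤ)) ≤ ε / 4 + ε / 4 := by
          refine hsumq F _ (fun p hp q hq hpq => Fin.ext (by omega)) fun k hk => ?_
          have hkN := (Finset.mem_filter.mp hk).2
          have hj1 := j.isLt
          have hk1 := k.isLt
          omega
        have hb2 : ∑ k ∈ F, qb ((j : ℤ) - (k : ℤ)) ≤ ε / 4 + ε / 4 := by
          refine hsumq F _ (fun p hp q hq hpq => Fin.ext (by omega)) fun k hk => ?_
          have hkN := (Finset.mem_filter.mp hk).2
          have hj1 := j.isLt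
          have hk1 := k.isLt
          omega
        linarith
    have e1 : star x ⬝ᵥ E *ᵥ x = ∑ k, ∑ j, star (x k) * (E k j * x j) := by
      simp [dotProduct, mulVec, Finset.mul_sum]
    have e2 : ‖star x ⬝ᵥ E *ᵥ x‖ ≤ ∑ k, ∑ j, ‖x k‖ * (‖E k j‖ * ‖x j‖) := by
      rw [e1]
      refine le_trans (norm_sum_le _ _) (Finset.sum_le_sum fun k _ => ?_)
      refine le_trans (norm_sum_le _ _) (Finset.sum_le_sum fun j _ => ?_)
      rw [norm_mul, norm_mul, norm_star]
    have e3 : ∑ k, ∑ j, ‖x k‖ * (‖E k j‖ * ‖x j‖)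
        ≤ ∑ k, ∑ j, g k j * ((‖x k‖ ^ 2 + ‖x j‖ ^ 2) / 2) :=
      Finset.sum_le_sum fun k _ => Finset.sum_le_sum fun j _ => hstepC k j
    have e4 : ∑ k, ∑ j, g k j * ((‖x k‖ ^ 2 + ‖x j‖ ^ 2) / 2)
        = (∑ k, ∑ j, g k j * ‖x k‖ ^ 2) / 2 + (∑ k, ∑ j, g k j * ‖x j‖ ^ 2) / 2 := by
      rw [Finset.sum_div, Finset.sum_div, ← Finset.sum_add_distrib]
      refine Finset.sum_congr rfl fun k _ => ?_
      rw [Finset.sum_div, Finset.sum_div, ← Finset.sum_add_distrib]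
      refine Finset.sum_congr rfl fun j _ => ?_
      ring
    have e5 : (∑ k, ∑ j, g k j * ‖x k‖ ^ 2) ≤ ε * ∑ j, ‖x j‖ ^ 2 := by
      calc ∑ k, ∑ j, g k j * ‖x k‖ ^ 2 = ∑ k, (∑ j, g k j) * ‖x k‖ ^ 2 :=
            Finset.sum_congr rfl fun k _ => by rw [Finset.sum_mul]
      _ ≤ ∑ k, ε * ‖x k‖ ^ 2 := Finset.sum_le_sum fun k _ =>
            mul_le_mul_of_nonneg_right (hrow k) (by positivity)
      _ = ε * ∑ k, ‖x k‖ ^ 2 := by rw [Finset.mul_sum]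
    have e6 : (∑ k, ∑ j, g k j * ‖x j‖ ^ 2) ≤ ε * ∑ j, ‖x j‖ ^ 2 := by
      rw [Finset.sum_comm]
      calc ∑ j, ∑ k, g k j * ‖x j‖ ^ 2 = ∑ j, (∑ k, g k j) * ‖x j‖ ^ 2 :=
            Finset.sum_congr rfl fun j _ => by rw [Finset.sum_mul]
      _ ≤ ∑ j, ε * ‖x j‖ ^ 2 := Finset.sum_le_sum fun j _ =>
            mul_le_mul_of_nonneg_right (hcol j) (by positivity)
      _ = ε * ∑ j, ‖x j‖ ^ 2 := by rw [Finset.mul_sum]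
    linarith
  have hsub : {j : Fin n | ∃ ω, ε < |sortedEigenvalues (hherm n ω) j|}
      ⊆ {j : Fin n | (j : ℕ) < N₀ ∨ n ≤ (j : ℕ) + N₀} := by
    rintro j ⟨ω, hω⟩
    exact sorted_loc (hherm n ω) hε (hqbnd ω) j hω
  exact le_trans (Set.ncard_le_ncard hsub (Set.toFinite _)) (loc_card_le N₀)
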